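/- The 6×6 characteristic matrix of the Bianchi evolution equations for one block, namely M(ξ) with first 3×3 diagonal blocks ξ_0·I, off-diagonal blocks the antisymmetric matrices N·(curl symbol) as displayed (rows: (0,0,0,ξ_2,−ξ_1,0; 0,0,0,0,ξ_3,−ξ_2; 0,0,0,−ξ_3,0,ξ_1) times N and its transpose), is symmetric and its determinant equals −N^6 (ξ_0 ξ^0)(ξ_α ξ^α)², where ξ^0 = −N^{−2}ξ_0 and ξ_αξ^α = −N^{−2}ξ_0² + ξ_1² + ξ_2² + ξ_3². -/

import Mathlib

set_option maxRecDepth 20000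
set_option maxHeartbeats 2000000


open Matrix

/-- The 6×6 characteristic matrix of one block of the Bianchi evolution equations. -/
def bianchiSymbol (N : ℝ) (ξ : Fin 4 → ℝ) : Matrix (Fin 6) (Fin 6) ℝ :=
  !![ξ 0,   0,     0,     0,        N * ξ 3,  -(N * ξ 2);
     0,     ξ 0,   0,     -(N * ξ 3), 0,      N * ξ 1;
     0,     0,     ξ 0,   N * ξ 2,  -(N * ξ 1), 0;
     0,     -(N * ξ 3), N * ξ 2, ξ 0, 0,      0;
     N * ξ 3, 0,   -(N * ξ 1), 0,    ξ 0,    0;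
     -(N * ξ 2), N * ξ 1, 0,    0,    0,      ξ 0]

/-- the characteristic matrix of the Bianchi evolution equations is symmetric
and its determinant equals `−N^6 (ξ_0 ξ^0)(ξ_α ξ^α)²` with `ξ^0 = −N^{−2}ξ_0` and
`ξ_αξ^α = −N^{−2}ξ_0² + ξ_1² + ξ_2² + ξ_3²`. -/
theorem bianchi_symbol_symm_and_det (N : ℝ) (hN : 0 < N) (ξ : Fin 4 → ℝ) :
    (bianchiSymbol N ξ).IsSymm ∧
    (bianchiSymbol N ξ).det
      = -N^6 * (ξ 0 * (-(N⁻¹^2) * ξ 0))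
          * (-(N⁻¹^2) * (ξ 0)^2 + (ξ 1)^2 + (ξ 2)^2 + (ξ 3)^2)^2 := by
  have hN0 : N ≠ 0 := hN.ne'
  constructor
  · ext i j
    fin_cases i <;> fin_cases j <;> rfl
  · have key : (bianchiSymbol N ξ).det
        = (ξ 0)^2 * ((ξ 0)^2 - N^2*((ξ 1)^2+(ξ 2)^2+(ξ 3)^2))^2 := by
      simp only [bianchiSymbol]
      simp +decide [Matrix.det_succ_row_zero, Fin.sum_univ_succ, Fin.succAbove]
      ring
    rw [key]
    field_simp
    ring
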